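/- Fix samples ξ_1,…,ξ_b and a replacement sample ξ_i', where each ℓ(·, ξ) is differentiable, σ-almost convex and β-smooth on a real inner product space, and let r be γ-strongly convex with γ > σ. Let ŵ minimize F̂(w) = (1/b)Σ_{j=1}^b ℓ(w, ξ_j) + r(w), and let ŵ⁽ⁱ⁾ minimize the objective F̂⁽ⁱ⁾ obtained by replacing ξ_i with ξ_i'. Then (γ − σ)b · ‖ŵ⁽ⁱ⁾ − ŵ‖² ≤ (ℓ(ŵ⁽ⁱ⁾, ξ_i) − ℓ(ŵ, ξ_i)) + (ℓ(ŵ, ξ_i') − ℓ(ŵ⁽ⁱ⁾, ξ_i')). -/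

import Mathlib

open scoped RealInnerProductSpace

/-- Growth bound at a minimizer for a function satisfying a strong-convexity-type
inequality with respect to some map `G` (no differentiability needed). -/
lemma growth_aux {E : Type*} [NormedAddCommGroup E] [InnerProductSpace ℝ E]
    (F : E → ℝ) (G : E → E) (μ : ℝ) (hμ : 0 ≤ μ)
    (h : ∀ w w', μ / 2 * ‖w - w'‖ ^ 2 ≤ F w - F w' - ⟪G w', w - w'⟫)
    (x xs : E) (hmin : ∀ y, F xs ≤ F y) :
    μ / 2 * ‖x - xs‖ ^ 2 ≤ F x - F xs := by
  have key : ∀ t : ℝ, 0 < t → t < 1 →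
      μ / 2 * ((1 - t) * ‖x - xs‖ ^ 2) ≤ F x - F xs := by
    intro t ht0 ht1
    set z := xs + t • (x - xs) with hz
    have hxz : x - z = (1 - t) • (x - xs) := by
      rw [hz]; module
    have hxsz : xs - z = (-t) • (x - xs) := by
      rw [hz]; module
    have h1 := h x z
    have h2 := h xs z
    rw [hxz] at h1
    rw [hxsz] at h2
    rw [norm_smul, real_inner_smul_right] at h1
    rw [norm_smul, real_inner_smul_right] at h2
    rw [Real.norm_eq_abs, abs_of_nonneg (by linarith : (0:ℝ) ≤ 1 - t)] at h1
    rw [Real.norm_eq_abs, abs_of_nonpos (by linarith : (-t:ℝ) ≤ 0)] at h2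
    have hminz := hmin z
    have e1 : ((1 - t) * ‖x - xs‖) ^ 2 = (1-t)^2 * ‖x - xs‖^2 := by ring
    have e2 : (- -t * ‖x - xs‖) ^ 2 = t^2 * ‖x - xs‖^2 := by ring
    rw [e1] at h1; rw [e2] at h2
    nlinarith [mul_le_mul_of_nonneg_left h1 ht0.le,
      mul_le_mul_of_nonneg_left h2 (by linarith : (0:ℝ) ≤ 1 - t)]
  have hD : 0 ≤ F x - F xs := by linarith [hmin x]
  have hM0 : 0 ≤ μ / 2 * ‖x - xs‖ ^ 2 := by positivity
  refine le_of_forall_pos_le_add ?_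
  intro ε hε
  set M := μ / 2 * ‖x - xs‖ ^ 2 with hM
  set t := min (1/2 : ℝ) (ε / (M + 1)) with ht
  have ht0 : 0 < t := lt_min (by norm_num) (div_pos hε (by linarith))
  have ht1 : t < 1 := lt_of_le_of_lt (min_le_left _ _) (by norm_num)
  have hk := key t ht0 ht1
  have htM : t * M ≤ ε := by
    have h1 : t ≤ ε / (M + 1) := min_le_right _ _
    have h2 : t * M ≤ (ε / (M + 1)) * M :=
      mul_le_mul_of_nonneg_right h1 hM0
    have h3 : (ε / (M + 1)) * M ≤ ε := by
      rw [div_mul_eq_mul_div, div_le_iff₀ (by linarith : (0:ℝ) < M + 1)]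
      nlinarith
    linarith
  have : M - t * M = μ / 2 * ((1 - t) * ‖x - xs‖ ^ 2) := by rw [hM]; ring
  linarith

/-- Strong convexity inequality for the regularized empirical objective. -/
lemma obj_strong_aux {E : Type*} [NormedAddCommGroup E] [InnerProductSpace ℝ E]
    {Ξ : Type*}
    (ℓ : E → Ξ → ℝ) (ℓ' : E → Ξ → E) (r : E → ℝ) (r' : E → E)
    (σ γ : ℝ) (b : ℕ) (hb0 : 0 < b)
    (hℓalmost : ∀ ξ w w', ℓ w ξ - ℓ w' ξ - ⟪ℓ' w' ξ, w - w'⟫ ≥ -(σ / 2) * ‖w - w'‖ ^ 2)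
    (hrstrong : ∀ w w', r w - r w' - ⟪r' w', w - w'⟫ ≥ γ / 2 * ‖w - w'‖ ^ 2)
    (ξs : Fin b → Ξ) (w w' : E) :
    (γ - σ) / 2 * ‖w - w'‖ ^ 2 ≤
      ((b : ℝ)⁻¹ * ∑ j, ℓ w (ξs j) + r w) - ((b : ℝ)⁻¹ * ∑ j, ℓ w' (ξs j) + r w')
        - ⟪(b : ℝ)⁻¹ • ∑ j, ℓ' w' (ξs j) + r' w', w - w'⟫ := by
  have hb : (0:ℝ) < b := Nat.cast_pos.mpr hb0
  have hin : ⟪(b : ℝ)⁻¹ • ∑ j, ℓ' w' (ξs j) + r' w', w - w'⟫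
      = (b : ℝ)⁻¹ * ∑ j, ⟪ℓ' w' (ξs j), w - w'⟫ + ⟪r' w', w - w'⟫ := by
    rw [inner_add_left, real_inner_smul_left, sum_inner]
  have h1 : (b : ℝ) * (-(σ / 2) * ‖w - w'‖ ^ 2)
      ≤ ∑ j, (ℓ w (ξs j) - ℓ w' (ξs j) - ⟪ℓ' w' (ξs j), w - w'⟫) := by
    calc (b : ℝ) * (-(σ / 2) * ‖w - w'‖ ^ 2)
        = ∑ _j : Fin b, (-(σ / 2) * ‖w - w'‖ ^ 2) := by
          rw [Finset.sum_const, Finset.card_univ, Fintype.card_fin, nsmul_eq_mul]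
      _ ≤ _ := Finset.sum_le_sum fun j _ => hℓalmost _ _ _
  have h2 := hrstrong w w'
  have hsplit : ∑ j, (ℓ w (ξs j) - ℓ w' (ξs j) - ⟪ℓ' w' (ξs j), w - w'⟫)
      = ∑ j, ℓ w (ξs j) - ∑ j, ℓ w' (ξs j) - ∑ j, ⟪ℓ' w' (ξs j), w - w'⟫ := by
    simp [Finset.sum_sub_distrib]
  rw [hin]
  have h1' := mul_le_mul_of_nonneg_left h1 (inv_nonneg.mpr hb.le)
  rw [hsplit, mul_sub, mul_sub] at h1'
  have hcancel : (b:ℝ)⁻¹ * ((b:ℝ) * (-(σ / 2) * ‖w - w'‖ ^ 2))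
      = -(σ / 2) * ‖w - w'‖ ^ 2 := by
    field_simp
  rw [hcancel] at h1'
  linarith

/-- Replace-one-sample stability inequality: with `ℓ(·,ξ)` differentiable,
`σ`-almost convex and `β`-smooth, `r` `γ`-strongly convex with `γ > σ`, `ŵ` the minimizer
of `F̂` on samples `ξ_1,…,ξ_b` and `ŵ⁽ⁱ⁾` the minimizer after replacing `ξ_i` by `ξ_i'`,
`(γ − σ)b‖ŵ⁽ⁱ⁾ − ŵ‖² ≤ (ℓ(ŵ⁽ⁱ⁾,ξ_i) − ℓ(ŵ,ξ_i)) + (ℓ(ŵ,ξ_i') − ℓ(ŵ⁽ⁱ⁾,ξ_i'))`. -/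
theorem replace_one_sample_stability
    {E : Type*} [NormedAddCommGroup E] [InnerProductSpace ℝ E] [CompleteSpace E]
    {Ξ : Type*}
    (ℓ : E → Ξ → ℝ) (ℓ' : E → Ξ → E) (r : E → ℝ) (r' : E → E)
    (β σ γ : ℝ) (b : ℕ) (hb0 : 0 < b)
    (hσ : 0 ≤ σ) (hγ : σ < γ)
    (hℓdiff : ∀ w ξ, HasGradientAt (fun x => ℓ x ξ) (ℓ' w ξ) w)
    (hℓsmooth : ∀ ξ w w', ‖ℓ' w ξ - ℓ' w' ξ‖ ≤ β * ‖w - w'‖)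
    (hℓalmost : ∀ ξ w w', ℓ w ξ - ℓ w' ξ - ⟪ℓ' w' ξ, w - w'⟫ ≥ -(σ / 2) * ‖w - w'‖ ^ 2)
    (hrdiff : ∀ w, HasGradientAt r (r' w) w)
    (hrstrong : ∀ w w', r w - r w' - ⟪r' w', w - w'⟫ ≥ γ / 2 * ‖w - w'‖ ^ 2)
    (ξs : Fin b → Ξ) (i : Fin b) (ξ' : Ξ)
    (wHat wHatI : E)
    (hwHat : ∀ x, (b : ℝ)⁻¹ * ∑ j, ℓ wHat (ξs j) + r wHat
          ≤ (b : ℝ)⁻¹ * ∑ j, ℓ x (ξs j) + r x)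
    (hwHatI : ∀ x,
        (b : ℝ)⁻¹ * ∑ j, ℓ wHatI (Function.update ξs i ξ' j) + r wHatI
          ≤ (b : ℝ)⁻¹ * ∑ j, ℓ x (Function.update ξs i ξ' j) + r x) :
    (γ - σ) * b * ‖wHatI - wHat‖ ^ 2
      ≤ (ℓ wHatI (ξs i) - ℓ wHat (ξs i)) + (ℓ wHat ξ' - ℓ wHatI ξ') := by
  have hb : (0:ℝ) < b := Nat.cast_pos.mpr hb0
  have hμ : (0:ℝ) ≤ γ - σ := by linarith
  -- objective 1
  have hA := growth_aux (fun w => (b : ℝ)⁻¹ * ∑ j, ℓ w (ξs j) + r w)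
    (fun w => (b : ℝ)⁻¹ • ∑ j, ℓ' w (ξs j) + r' w) (γ - σ) hμ
    (fun w w' => obj_strong_aux ℓ ℓ' r r' σ γ b hb0 hℓalmost hrstrong ξs w w')
    wHatI wHat hwHat
  have hB := growth_aux (fun w => (b : ℝ)⁻¹ * ∑ j, ℓ w (Function.update ξs i ξ' j) + r w)
    (fun w => (b : ℝ)⁻¹ • ∑ j, ℓ' w (Function.update ξs i ξ' j) + r' w) (γ - σ) hμ
    (fun w w' => obj_strong_aux ℓ ℓ' r r' σ γ b hb0 hℓalmost hrstrong
      (Function.update ξs i ξ') w w')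
    wHat wHatI hwHatI
  rw [norm_sub_rev wHat wHatI] at hB
  -- rewrite the updated sums
  have hupd : ∀ w : E, ∑ j, ℓ w (Function.update ξs i ξ' j)
      = ∑ j, ℓ w (ξs j) - ℓ w (ξs i) + ℓ w ξ' := by
    intro w
    have hfun : (fun j => ℓ w (Function.update ξs i ξ' j))
        = Function.update (fun j => ℓ w (ξs j)) i (ℓ w ξ') := by
      ext j
      by_cases hj : j = i
      · subst hj; simp
      · simp [Function.update_of_ne hj]
    rw [hfun, Finset.sum_update_of_mem (Finset.mem_univ i)]
    have := Finset.sum_eq_sum_sdiff_singleton_add (Finset.mem_univ i)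
      (fun j => ℓ w (ξs j))
    linarith
  rw [hupd wHat, hupd wHatI] at hB
  -- combine
  have hsum : (γ - σ) * ‖wHatI - wHat‖ ^ 2
      ≤ (b : ℝ)⁻¹ * ((ℓ wHatI (ξs i) - ℓ wHat (ξs i)) + (ℓ wHat ξ' - ℓ wHatI ξ')) := by
    nlinarith [hA, hB]
  have h := mul_le_mul_of_nonneg_left hsum hb.le
  have heq : (b:ℝ) * ((b:ℝ)⁻¹ * ((ℓ wHatI (ξs i) - ℓ wHat (ξs i)) + (ℓ wHat ξ' - ℓ wHatI ξ')))
      = (ℓ wHatI (ξs i) - ℓ wHat (ξs i)) + (ℓ wHat ξ' - ℓ wHatI ξ') := by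
    field_simp
  rw [heq] at h
  nlinarith [h]
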